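/- Let R be an algebraic curvature tensor on V = Σ ⊕ Σ^⊥ with nonnegative sectional curvature and R(z,u)z = 0 for all z ∈ Σ, u ∈ Σ^⊥. If the curvature operator ρ of R is 3-nonnegative, then R(x,y)u = 0 for all x, y ∈ Σ and u ∈ Σ^⊥. -/

import Mathlib

open scoped RealInnerProductSpace

set_option maxHeartbeats 2000000 in
/-- If the curvature operator ρ of an algebraic curvature tensor R on V = Σ ⊕ Σᗮ with
nonnegative sectional curvature and flat mixed planes is 3-nonnegative (equivalently:
∑ ⟪ρ ξᵢ, ξᵢ⟫ ≥ 0 for every orthonormal triple of bivectors), then R(x,y)u = 0 for all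
x, y ∈ Σ and u ∈ Σᗮ. -/
theorem stmt12 {V : Type*} [NormedAddCommGroup V] [InnerProductSpace ℝ V] [FiniteDimensional ℝ V] (Sig : Submodule ℝ V)
    (R : V →ₗ[ℝ] V →ₗ[ℝ] V →ₗ[ℝ] V)
    (hanti1 : ∀ x y, R x y = - R y x)
    (hanti2 : ∀ x y z w, ⟪R x y z, w⟫ = - ⟪R x y w, z⟫)
    (hpair : ∀ x y z w, ⟪R x y z, w⟫ = ⟪R z w x, y⟫)
    (hbianchi : ∀ x y z, R x y z + R y z x + R z x y = 0)
    (hnonneg : ∀ x y, 0 ≤ ⟪R x y y, x⟫)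
    (hflat : ∀ z ∈ Sig, ∀ u ∈ Sigᗮ, R z u z = 0)
    {Λ : Type*} [NormedAddCommGroup Λ] [InnerProductSpace ℝ Λ]
    (ω : V →ₗ[ℝ] V →ₗ[ℝ] Λ)
    (hωinner : ∀ x y z w : V, ⟪ω x y, ω z w⟫ = ⟪x, z⟫ * ⟪y, w⟫ - ⟪x, w⟫ * ⟪y, z⟫)
    (ρ : Λ →ₗ[ℝ] Λ) (hρsym : ρ.IsSymmetric)
    (hρ : ∀ x y z w : V, ⟪ρ (ω x y), ω z w⟫ = ⟪R x y w, z⟫)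
    (h3 : ∀ ξ : Fin 3 → Λ, Orthonormal ℝ ξ → 0 ≤ ∑ i : Fin 3, ⟪ρ (ξ i), ξ i⟫)
    (x : V) (hx : x ∈ Sig) (y : V) (hy : y ∈ Sig) (u : V) (hu : u ∈ Sigᗮ) :
    R x y u = 0 := by
  -- A: polarization of flatness of mixed planes
  have hA : ∀ a ∈ Sig, ∀ b ∈ Sig, ∀ w ∈ Sigᗮ, R a w b + R b w a = 0 := by
    intro a ha b hb w hw
    have h1 := hflat (a + b) (Sig.add_mem ha hb) w hw
    have h2 := hflat a ha w hw
    have h3' := hflat b hb w hw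
    simp only [map_add, LinearMap.add_apply, h2, h3', zero_add, add_zero] at h1
    linear_combination (norm := abel) h1
  -- D1: ⟪R a w v, a⟫ = 0 for a tangent, w normal
  have hD1 : ∀ a ∈ Sig, ∀ w ∈ Sigᗮ, ∀ v : V, ⟪R a w v, a⟫ = 0 := by
    intro a ha w hw v
    rw [hanti2, hflat a ha w hw]
    simp
  -- D2: ⟪R a w w, b⟫ = 0 for a, b tangent, w normal
  have hD2 : ∀ a ∈ Sig, ∀ b ∈ Sig, ∀ w ∈ Sigᗮ, ⟪R a w w, b⟫ = 0 := by
    intro a ha b hb w hw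
    have hab : R a w b = - R b w a := by
      linear_combination (norm := abel) (hA a ha b hb w hw)
    have f1 : ⟪R a w w, b⟫ = -⟪R a w b, w⟫ := hanti2 a w w b
    have f2 : ⟪R a w b, w⟫ = -⟪R b w a, w⟫ := by rw [hab]; simp
    have f3 : ⟪R b w a, w⟫ = -⟪R b w w, a⟫ := hanti2 b w a w
    have f4 : ⟪R a w w, b⟫ = ⟪R w b a, w⟫ := hpair a w w b
    have f5 : ⟪R w b a, w⟫ = -⟪R b w a, w⟫ := by rw [hanti1 w b]; simp
    linarith
  -- B: first Bianchi consequence R a b w = 2 R a w b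
  have hB : ∀ a ∈ Sig, ∀ b ∈ Sig, ∀ w ∈ Sigᗮ, R a b w = R a w b + R a w b := by
    intro a ha b hb w hw
    have hab : R b w a = - R a w b := by
      linear_combination (norm := abel) (hA a ha b hb w hw)
    have h1 := hbianchi a b w
    rw [hanti1 w a] at h1
    simp only [LinearMap.neg_apply] at h1
    rw [hab] at h1
    linear_combination (norm := abel) h1
  -- T: totally tangential curvature with one normal slot vanishes
  have hT : ∀ a ∈ Sig, ∀ b ∈ Sig, ∀ c ∈ Sig, ∀ w ∈ Sigᗮ, ⟪R a b c, w⟫ = 0 := by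
    intro a ha b hb c hc w hw
    have rel : ∀ p ∈ Sig, ∀ q ∈ Sig, ∀ r ∈ Sig, ⟪R p q r, w⟫ = -2 * ⟪R q r p, w⟫ := by
      intro p hp q hq r hr
      have f1 : ⟪R p q r, w⟫ = -⟪R p q w, r⟫ := hanti2 p q r w
      have f2 : R p q w = R p w q + R p w q := hB p hp q hq w hw
      have f3 : ⟪R p w q, r⟫ = ⟪R q r p, w⟫ := hpair p w q r
      rw [f1, f2, inner_add_left, f3]; ring
    have g1 := rel a ha b hb c hc
    have g2 := rel b hb c hc a ha
    have g3 := rel c hc a ha b hb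
    linarith
  -- C0: mixed curvature vanishes on orthonormal quadruples (uses 3-nonnegativity)
  have hC0 : ∀ a ∈ Sig, ∀ b ∈ Sig, ∀ w ∈ Sigᗮ, ∀ v ∈ Sigᗮ, ‖a‖ = 1 → ‖b‖ = 1 →
      ‖w‖ = 1 → ‖v‖ = 1 → ⟪a, b⟫ = 0 → ⟪w, v⟫ = 0 → ⟪R a w v, b⟫ = 0 := by
    intro a ha b hb w hw v hv na nb nw nv hab hwv
    have iaa : ⟪a, a⟫ = (1:ℝ) := by rw [real_inner_self_eq_norm_mul_norm, na]; norm_num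
    have ibb : ⟪b, b⟫ = (1:ℝ) := by rw [real_inner_self_eq_norm_mul_norm, nb]; norm_num
    have iww : ⟪w, w⟫ = (1:ℝ) := by rw [real_inner_self_eq_norm_mul_norm, nw]; norm_num
    have ivv : ⟪v, v⟫ = (1:ℝ) := by rw [real_inner_self_eq_norm_mul_norm, nv]; norm_num
    have iba : ⟪b, a⟫ = (0:ℝ) := by rw [real_inner_comm]; exact hab
    have ivw : ⟪v, w⟫ = (0:ℝ) := by rw [real_inner_comm]; exact hwv
    have iaw : ⟪a, w⟫ = (0:ℝ) := (Submodule.mem_orthogonal Sig w).mp hw a ha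
    have iav : ⟪a, v⟫ = (0:ℝ) := (Submodule.mem_orthogonal Sig v).mp hv a ha
    have ibw : ⟪b, w⟫ = (0:ℝ) := (Submodule.mem_orthogonal Sig w).mp hw b hb
    have ibv : ⟪b, v⟫ = (0:ℝ) := (Submodule.mem_orthogonal Sig v).mp hv b hb
    have iwa : ⟪w, a⟫ = (0:ℝ) := by rw [real_inner_comm]; exact iaw
    have iva : ⟪v, a⟫ = (0:ℝ) := by rw [real_inner_comm]; exact iav
    have iwb : ⟪w, b⟫ = (0:ℝ) := by rw [real_inner_comm]; exact ibw
    have ivb : ⟪v, b⟫ = (0:ℝ) := by rw [real_inner_comm]; exact ibv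
    set c : ℝ := (Real.sqrt 2)⁻¹ with hc
    have hcc : c * c = 1/2 := by
      rw [hc, ← mul_inv, Real.mul_self_sqrt (by norm_num : (0:ℝ) ≤ 2)]
      norm_num
    have key : ∀ ε : ℝ, ε * ε = 1 → 0 ≤ ε * ⟪R a w v, b⟫ := by
      intro ε hε2
      set ξ : Fin 3 → Λ := ![ω a v, ω b w, c • (ω a w + ε • ω b v)] with hξ
      have hON : Orthonormal ℝ ξ := by
        rw [orthonormal_iff_ite]
        intro i j
        fin_cases i <;> fin_cases j <;>
          simp [hξ, hωinner, inner_add_left, inner_add_right, real_inner_smul_left,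
            real_inner_smul_right, iaa, ibb, iww, ivv, hab, iba, hwv, ivw, iaw, iwa,
            iav, iva, ibw, iwb, ibv, ivb, -inner_self_eq_norm_sq_to_K] <;>
          nlinarith [hcc, hε2]
      have hsum := h3 ξ hON
      rw [Fin.sum_univ_three] at hsum
      have e0 : ξ 0 = ω a v := rfl
      have e1 : ξ 1 = ω b w := rfl
      have e2 : ξ 2 = c • (ω a w + ε • ω b v) := rfl
      have hsym2 : ⟪R b v w, a⟫ = ⟪R a w v, b⟫ := by
        rw [← hρ b v a w, hρsym (ω b v) (ω a w), real_inner_comm, hρ]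
      have q0 : ⟪ρ (ξ 0), ξ 0⟫ = 0 := by rw [e0, hρ]; exact hD1 a ha v hv v
      have q1 : ⟪ρ (ξ 1), ξ 1⟫ = 0 := by rw [e1, hρ]; exact hD1 b hb w hw w
      have q2 : ⟪ρ (ξ 2), ξ 2⟫ = ε * ⟪R a w v, b⟫ := by
        rw [e2]
        simp only [map_smul, map_add, inner_add_left, inner_add_right,
          real_inner_smul_left, real_inner_smul_right, hρ]
        rw [hsym2, hD1 a ha w hw w, hD1 b hb v hv v]
        linear_combination (2 * ε * ⟪R a w v, b⟫) * hcc
      rw [q0, q1, q2] at hsum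
      linarith
    have k1 := key 1 (by norm_num)
    have k2 := key (-1) (by norm_num)
    linarith
  -- C1: mixed curvature vanishes on orthogonal quadruples
  have hC1 : ∀ a ∈ Sig, ∀ b ∈ Sig, ∀ w ∈ Sigᗮ, ∀ v ∈ Sigᗮ, ⟪a, b⟫ = 0 → ⟪w, v⟫ = 0 →
      ⟪R a w v, b⟫ = 0 := by
    intro a ha b hb w hw v hv hab hwv
    rcases eq_or_ne a 0 with rfl | ha0
    · simp
    rcases eq_or_ne b 0 with rfl | hb0
    · simp
    rcases eq_or_ne w 0 with rfl | hw0
    · simp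
    rcases eq_or_ne v 0 with rfl | hv0
    · simp
    have key := hC0 (‖a‖⁻¹ • a) (Sig.smul_mem _ ha) (‖b‖⁻¹ • b) (Sig.smul_mem _ hb)
      (‖w‖⁻¹ • w) (Submodule.smul_mem _ _ hw) (‖v‖⁻¹ • v) (Submodule.smul_mem _ _ hv)
      (norm_smul_inv_norm ha0) (norm_smul_inv_norm hb0) (norm_smul_inv_norm hw0)
      (norm_smul_inv_norm hv0)
      (by simp [real_inner_smul_left, real_inner_smul_right, hab])
      (by simp [real_inner_smul_left, real_inner_smul_right, hwv])
    simp only [map_smul, LinearMap.smul_apply, real_inner_smul_left,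
      real_inner_smul_right] at key
    simpa [mul_eq_zero, norm_eq_zero, ha0, hb0, hw0, hv0] using key
  -- C: mixed curvature vanishes in general
  have hC : ∀ a ∈ Sig, ∀ b ∈ Sig, ∀ w ∈ Sigᗮ, ∀ v ∈ Sigᗮ, ⟪R a w v, b⟫ = 0 := by
    intro a ha b hb w hw v hv
    rcases eq_or_ne a 0 with rfl | ha0
    · simp
    rcases eq_or_ne w 0 with rfl | hw0
    · simp
    have haa : ⟪a, a⟫ ≠ (0:ℝ) := fun h => ha0 ((inner_self_eq_zero (𝕜 := ℝ)).mp h)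
    have hww : ⟪w, w⟫ ≠ (0:ℝ) := fun h => hw0 ((inner_self_eq_zero (𝕜 := ℝ)).mp h)
    set t : ℝ := ⟪a, b⟫ / ⟪a, a⟫ with ht
    set s : ℝ := ⟪w, v⟫ / ⟪w, w⟫ with hs
    have hb' : b - t • a ∈ Sig := Sig.sub_mem hb (Sig.smul_mem _ ha)
    have hv' : v - s • w ∈ Sigᗮ := Submodule.sub_mem _ hv (Submodule.smul_mem _ _ hw)
    have hab' : ⟪a, b - t • a⟫ = (0:ℝ) := by
      rw [inner_sub_right, real_inner_smul_right, ht, div_mul_cancel₀ _ haa, sub_self]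
    have hwv' : ⟪w, v - s • w⟫ = (0:ℝ) := by
      rw [inner_sub_right, real_inner_smul_right, hs, div_mul_cancel₀ _ hww, sub_self]
    have main := hC1 a ha (b - t • a) hb' w hw (v - s • w) hv' hab' hwv'
    have expand : ⟪R a w (v - s • w), b - t • a⟫ = ⟪R a w v, b⟫ := by
      simp only [map_sub, map_smul, inner_sub_left, inner_sub_right,
        real_inner_smul_left, real_inner_smul_right]
      rw [hD1 a ha w hw v, hD2 a ha b hb w hw, hD1 a ha w hw w]
      ring
    rw [expand] at main
    exact main
  -- conclude
  have key : R x u y = 0 := by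
    rw [← inner_self_eq_zero (𝕜 := ℝ)]
    obtain ⟨z, hz, v, hv, hzv⟩ := Submodule.exists_add_mem_mem_orthogonal (K := Sig) (R x u y)
    have e1 : ⟪R x u y, z⟫ = 0 := by
      rw [hpair x u y z]
      exact hT y hy z hz x hx u hu
    have e2 : ⟪R x u y, v⟫ = 0 := by
      rw [hanti2, hC x hx y hy u hu v hv]
      simp
    have : (⟪R x u y, R x u y⟫ : ℝ) = ⟪R x u y, z⟫ + ⟪R x u y, v⟫ := by
      rw [← inner_add_right, ← hzv]
    rw [this, e1, e2, add_zero]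
  rw [hB x hx y hy u hu, key]
  simp
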